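/- Let A, B, C be positive integers with D := B² − 4AC > 0, and let q(m,n) = A·m² + B·m·n + C·n². Then the series whose terms are 1/(q(x)·q(y)·q(x+y)), summed over all pairs (x,y) ∈ S, converges and its sum equals (1/D)·( B/(A·C) − 2·arsinh( (B/(A·C))·(√D/2) )/√D ), where arsinh is the inverse hyperbolic sine. (This is the paper's Theorem 6, formula (top3), for the topograph of q rooted at the standard-basis edge, with r₀ = A, t₀ = C, e₀ = B; positivity of A, B, C guarantees q > 0 on the nonnegative cone, so the rooted half is admissible.) -/

import Mathlib

/-- The binary quadratic form `q(m,n) = A m² + B m n + C n²`, with real values. -/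
noncomputable def q (A B C : ℤ) (v : ℤ × ℤ) : ℝ :=
  (A : ℝ) * (v.1 : ℝ) ^ 2 + (B : ℝ) * (v.1 : ℝ) * (v.2 : ℝ) + (C : ℝ) * (v.2 : ℝ) ^ 2

/-- Pairs of lattice vectors with nonnegative coordinates and determinant one. -/
def S : Set ((ℤ × ℤ) × (ℤ × ℤ)) :=
  {p | 0 ≤ p.1.1 ∧ 0 ≤ p.1.2 ∧ 0 ≤ p.2.1 ∧ 0 ≤ p.2.2 ∧
    p.1.1 * p.2.2 - p.1.2 * p.2.1 = 1}

namespace Top3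


def V : List Bool → (ℤ × ℤ) × (ℤ × ℤ)
  | [] => ((1, 0), (0, 1))
  | false :: w => ((V w).1, (V w).1 + (V w).2)
  | true :: w => ((V w).1 + (V w).2, (V w).2)

lemma V_mem_S : ∀ w, V w ∈ S := by
  intro w
  induction w with
  | nil => simp [V, S]
  | cons b w ih =>
    obtain ⟨h1, h2, h3, h4, h5⟩ := ih
    cases b
    · refine ⟨?_, ?_, ?_, ?_, ?_⟩ <;> simp only [V, Prod.fst_add, Prod.snd_add]
      · exact h1
      · exact h2
      · linarith
      · linarith
      · linear_combination h5
    · refine ⟨?_, ?_, ?_, ?_, ?_⟩ <;> simp only [V, Prod.fst_add, Prod.snd_add]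
      · linarith
      · linarith
      · exact h3
      · exact h4
      · linear_combination h5

lemma sum_pos_of_mem_S {p : (ℤ × ℤ) × (ℤ × ℤ)} (hp : p ∈ S) :
    1 ≤ p.1.1 + p.1.2 ∧ 1 ≤ p.2.1 + p.2.2 := by
  obtain ⟨h1, h2, h3, h4, h5⟩ := hp
  constructor
  · by_contra h
    have ha : p.1.1 = 0 := by omega
    have hb : p.1.2 = 0 := by omega
    rw [ha, hb] at h5; simp at h5
  · by_contra h
    have ha : p.2.1 = 0 := by omega
    have hb : p.2.2 = 0 := by omega
    rw [ha, hb] at h5; simp at h5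

lemma V_injective : Function.Injective V := by
  intro w₁
  induction w₁ with
  | nil =>
    intro w₂ h
    cases w₂ with
    | nil => rfl
    | cons b w =>
      exfalso
      have hs := sum_pos_of_mem_S (V_mem_S w)
      cases b <;> simp only [V] at h <;>
        · have h1 := congrArg (fun p => p.1.1 + p.1.2 + p.2.1 + p.2.2) h
          simp [Prod.fst_add, Prod.snd_add] at h1
          omega
  | cons b₁ w₁ ih =>
    intro w₂ h
    cases w₂ with
    | nil =>
      exfalso
      have hs := sum_pos_of_mem_S (V_mem_S w₁)
      cases b₁ <;> simp only [V] at h <;>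
        · have h1 := congrArg (fun p => p.1.1 + p.1.2 + p.2.1 + p.2.2) h
          simp [Prod.fst_add, Prod.snd_add] at h1
          omega
    | cons b₂ w₂ =>
      have hs₁ := sum_pos_of_mem_S (V_mem_S w₁)
      have hs₂ := sum_pos_of_mem_S (V_mem_S w₂)
      have hn₁ := V_mem_S w₁
      have hn₂ := V_mem_S w₂
      obtain ⟨n1, n2, n3, n4, -⟩ := hn₁
      obtain ⟨m1, m2, m3, m4, -⟩ := hn₂
      cases b₁ <;> cases b₂ <;> simp only [V, Prod.mk.injEq] at h
      · obtain ⟨hx, hy⟩ := h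
        have hy' : (V w₁).2 = (V w₂).2 := by
          rw [hx] at hy; exact add_left_cancel hy
        rw [ih (Prod.ext hx hy')]
      · exfalso
        obtain ⟨hx, hy⟩ := h
        rw [← hy] at hx
        have h1 := congrArg Prod.fst hx
        have h2 := congrArg Prod.snd hx
        simp [Prod.fst_add, Prod.snd_add] at h1 h2
        omega
      · exfalso
        obtain ⟨hx, hy⟩ := h
        rw [hy] at hx
        have h1 := congrArg Prod.fst hx
        have h2 := congrArg Prod.snd hx
        simp [Prod.fst_add, Prod.snd_add] at h1 h2
        omega
      · obtain ⟨hx, hy⟩ := h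
        have hx' : (V w₁).1 = (V w₂).1 := by
          rw [hy] at hx; exact add_right_cancel hx
        rw [ih (Prod.ext hx' hy)]


lemma V_surj_aux : ∀ n : ℕ, ∀ p ∈ S, p.1.1 + p.1.2 + p.2.1 + p.2.2 ≤ n → ∃ w, V w = p := by
  intro n
  induction n with
  | zero =>
    intro p hp hn
    have := sum_pos_of_mem_S hp
    omega
  | succ n ih =>
    rintro ⟨⟨a, b⟩, c, d⟩ hp hn
    obtain ⟨h1, h2, h3, h4, h5⟩ := hp
    simp only at h1 h2 h3 h4 h5 hn
    have hsum := sum_pos_of_mem_S (⟨h1, h2, h3, h4, h5⟩ : ((a,b),(c,d)) ∈ S)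
    simp only at hsum
    by_cases hf : a ≤ c ∧ b ≤ d
    · obtain ⟨hac, hbd⟩ := hf
      have hp' : ((a, b), (c - a, d - b)) ∈ S :=
        ⟨h1, h2, show (0:ℤ) ≤ c - a by omega, show (0:ℤ) ≤ d - b by omega,
          show a * (d - b) - b * (c - a) = 1 by linear_combination h5⟩
      obtain ⟨w, hw⟩ := ih _ hp' (show a + b + (c - a) + (d - b) ≤ (n:ℤ) by omega)
      refine ⟨false :: w, ?_⟩
      simp only [V, hw, Prod.mk.injEq, Prod.mk_add_mk]
      constructor <;> first | trivial | omega
    · by_cases ht : c ≤ a ∧ d ≤ b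
      · obtain ⟨hca, hdb⟩ := ht
        have hp' : ((a - c, b - d), (c, d)) ∈ S :=
          ⟨show (0:ℤ) ≤ a - c by omega, show (0:ℤ) ≤ b - d by omega, h3, h4,
            show (a - c) * d - (b - d) * c = 1 by linear_combination h5⟩
        obtain ⟨w, hw⟩ := ih _ hp' (show (a - c) + (b - d) + c + d ≤ (n:ℤ) by omega)
        refine ⟨true :: w, ?_⟩
        simp only [V, hw, Prod.mk.injEq, Prod.mk_add_mk]
        constructor <;> first | trivial | omega
      · -- root case or contradiction
        rcases le_or_gt a c with hac | hac <;> rcases le_or_gt b d with hbd | hbd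
        · exact absurd ⟨hac, hbd⟩ hf
        · -- a ≤ c, d < b : impossible
          exfalso
          have k1 : a * d ≤ c * d := by
            exact mul_le_mul_of_nonneg_right hac h4
          have k2 : d * c ≤ b * c := by
            exact mul_le_mul_of_nonneg_right (by omega) h3
          nlinarith
        · -- c < a, b < d (since ¬(c ≤ a ∧ d ≤ b) and c ≤ a, we get ¬(d ≤ b))
          -- root case
          have hbd' : b < d := by by_contra hcon; exact ht ⟨by omega, by omega⟩
          have k : (c + 1) * (b + 1) ≤ a * d := by
            apply mul_le_mul (by omega) (by omega) (by omega) (by omega)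
          have hb0 : b = 0 := by nlinarith
          have hc0 : c = 0 := by nlinarith
          have had : a * d = 1 := by rw [hb0, hc0] at h5; linarith
          have ha1 : a = 1 := by nlinarith
          have hd1 : d = 1 := by nlinarith
          exact ⟨[], by simp [V, ha1, hb0, hc0, hd1]⟩
        · exact absurd ⟨by omega, by omega⟩ ht

lemma V_surjS : ∀ p ∈ S, ∃ w, V w = p := by
  intro p hp
  exact V_surj_aux (p.1.1 + p.1.2 + p.2.1 + p.2.2).toNat p hp (by
    obtain ⟨h1, h2, h3, h4, _⟩ := hp; omega)



/-- arsinh addition law along the topograph. -/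
lemma arsinh_step (D r t e : ℝ) (hr : 0 < r) (ht : 0 < t) (he : 0 < e)
    (hD : 0 < D) (h : e ^ 2 - 4 * (r * t) = D) :
    Real.arsinh (e * Real.sqrt D / (2 * (r * t))) =
      Real.arsinh ((e + 2 * r) * Real.sqrt D / (2 * (r * (r + t + e)))) +
        Real.arsinh ((e + 2 * t) * Real.sqrt D / (2 * ((r + t + e) * t))) := by
  have hspos : 0 < r + t + e := by positivity
  have hd2 : Real.sqrt D ^ 2 = D := Real.sq_sqrt hD.le
  have hdpos : 0 < Real.sqrt D := Real.sqrt_pos.mpr hD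
  set d : ℝ := Real.sqrt D with hdd
  apply Real.sinh_injective
  rw [Real.sinh_arsinh, Real.sinh_add, Real.sinh_arsinh, Real.sinh_arsinh,
    Real.cosh_arsinh, Real.cosh_arsinh]
  have sq1 : (2 * (r * (r + t + e))) ^ 2 + ((e + 2 * r) * d) ^ 2
      = (D + 2 * (r * (r + t + e))) ^ 2 := by
    linear_combination (e + 2 * r) ^ 2 * hd2 + (4 * r * (r + t + e) - (e + 2*r)^2 + D + e^2 - 4*(r*t)) * h
  have sq2 : (2 * ((r + t + e) * t)) ^ 2 + ((e + 2 * t) * d) ^ 2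
      = (D + 2 * ((r + t + e) * t)) ^ 2 := by
    linear_combination (e + 2 * t) ^ 2 * hd2 + (4 * t * (r + t + e) - (e + 2*t)^2 + D + e^2 - 4*(r*t)) * h
  have e1 : 1 + ((e + 2 * r) * d / (2 * (r * (r + t + e)))) ^ 2
      = ((D + 2 * (r * (r + t + e))) / (2 * (r * (r + t + e)))) ^ 2 := by
    rw [div_pow, div_pow, ← sq1]
    field_simp
  have e2 : 1 + ((e + 2 * t) * d / (2 * ((r + t + e) * t))) ^ 2
      = ((D + 2 * ((r + t + e) * t)) / (2 * ((r + t + e) * t))) ^ 2 := by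
    rw [div_pow, div_pow, ← sq2]
    field_simp
  rw [e1, e2, Real.sqrt_sq (by positivity), Real.sqrt_sq (by positivity)]
  have hkey : (e + 2 * r) * (D + 2 * ((r + t + e) * t)) + (D + 2 * (r * (r + t + e))) * (e + 2 * t)
      = 2 * e * (r + t + e) ^ 2 := by
    linear_combination (2 * e + 2 * r + 2 * t) * h.symm
  calc e * d / (2 * (r * t))
      = d * (2 * e * (r + t + e) ^ 2) / (4 * (r * t * (r + t + e) ^ 2)) := by
        field_simp; ring
    _ = d * ((e + 2 * r) * (D + 2 * ((r + t + e) * t)) + (D + 2 * (r * (r + t + e))) * (e + 2 * t))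
          / (4 * (r * t * (r + t + e) ^ 2)) := by rw [hkey]
    _ = (e + 2 * r) * d / (2 * (r * (r + t + e))) * ((D + 2 * ((r + t + e) * t)) / (2 * ((r + t + e) * t)))
          + (D + 2 * (r * (r + t + e))) / (2 * (r * (r + t + e)))
            * ((e + 2 * t) * d / (2 * ((r + t + e) * t))) := by
        field_simp; ring




lemma arsinh_le_self {x : ℝ} (hx : 0 ≤ x) : Real.arsinh x ≤ x := by
  rcases eq_or_lt_of_le hx with h | h
  · simp [← h, Real.arsinh_zero]
  · have := Real.arsinh_lt_arsinh.mpr (Real.self_lt_sinh_iff.mpr h)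
    rw [Real.arsinh_sinh] at this; exact this.le

lemma sub_arsinh_le_cube {x : ℝ} (hx : 0 ≤ x) : x - Real.arsinh x ≤ x ^ 3 / 2 := by
  have key : ∀ y : ℝ, 0 ≤ y → 0 ≤ Real.arsinh y - y + y ^ 3 / 2 := by
    intro y hy
    set g : ℝ → ℝ := fun x => Real.arsinh x - x + x ^ 3 / 2 with hg
    have hderiv : ∀ x : ℝ, HasDerivAt g ((Real.sqrt (1 + x ^ 2))⁻¹ - 1 + 3 * x ^ 2 / 2) x := by
      intro x
      have h1 := (Real.hasDerivAt_arsinh x).sub (hasDerivAt_id x)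
      have h2 := (hasDerivAt_pow 3 x).div_const 2
      have := h1.add h2
      exact this.congr_deriv (by push_cast; ring)
    have mono : MonotoneOn g (Set.Ici (0:ℝ)) := by
      apply monotoneOn_of_deriv_nonneg (convex_Ici 0)
      · exact Continuous.continuousOn (by
          have : Continuous g := by
            apply Continuous.add
            apply Continuous.sub Real.continuous_arsinh continuous_id
            continuity
          exact this)
      · intro x _
        exact (hderiv x).differentiableAt.differentiableWithinAt
      · intro x hxmem
        rw [(hderiv x).deriv]
        have hle : Real.sqrt (1 + x ^ 2) ≤ 1 + x ^ 2 / 2 := by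
          have h2 : Real.sqrt (1 + x ^ 2) ≤ Real.sqrt ((1 + x ^ 2 / 2) ^ 2) :=
            Real.sqrt_le_sqrt (by nlinarith)
          rwa [Real.sqrt_sq (by positivity)] at h2
        have hpos : 0 < Real.sqrt (1 + x ^ 2) := Real.sqrt_pos.mpr (by positivity)
        have hinv : (1 + x ^ 2 / 2)⁻¹ ≤ (Real.sqrt (1 + x ^ 2))⁻¹ :=
          inv_anti₀ hpos hle
        have hinv2 : 1 - x ^ 2 / 2 ≤ (1 + x ^ 2 / 2)⁻¹ := by
          rw [inv_eq_one_div, le_div_iff₀ (by positivity)]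
          nlinarith
        nlinarith
    have h0 : g 0 = 0 := by simp [hg, Real.arsinh_zero]
    have := mono (Set.mem_Ici.mpr le_rfl) (Set.mem_Ici.mpr hy) hy
    rw [h0] at this
    simpa [hg] using this
  linarith [key x hx]



noncomputable def FF (D r t e : ℝ) : ℝ :=
  (1 / D) * (e / (r * t) - 2 * Real.arsinh (e * Real.sqrt D / (2 * (r * t))) / Real.sqrt D)

lemma FF_step (D r t e : ℝ) (hr : 0 < r) (ht : 0 < t) (he : 0 < e)
    (hD : 0 < D) (h : e ^ 2 - 4 * (r * t) = D) :
    FF D r t e = 1 / (r * t * (r + t + e)) + FF D r (r + t + e) (e + 2 * r)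
      + FF D (r + t + e) t (e + 2 * t) := by
  have hs : 0 < r + t + e := by positivity
  have hdpos : 0 < Real.sqrt D := Real.sqrt_pos.mpr hD
  unfold FF
  rw [arsinh_step D r t e hr ht he hD h]
  have h1 : (1:ℝ)/D * (e/(r*t)) = 1/(r*t*(r+t+e)) + 1/D*((e+2*r)/(r*(r+t+e))) + 1/D*((e+2*t)/((r+t+e)*t)) := by
    field_simp
    rw [← h]; ring
  linear_combination h1

lemma FF_nonneg (D r t e : ℝ) (hr : 0 < r) (ht : 0 < t) (he : 0 < e) (hD : 0 < D) :
    0 ≤ FF D r t e := by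
  have hdpos : 0 < Real.sqrt D := Real.sqrt_pos.mpr hD
  have hσ : (0:ℝ) ≤ e * Real.sqrt D / (2 * (r * t)) := by positivity
  have h1 : Real.arsinh (e * Real.sqrt D / (2 * (r * t))) ≤ e * Real.sqrt D / (2 * (r * t)) :=
    arsinh_le_self hσ
  have h2 : 2 * (e * Real.sqrt D / (2 * (r * t))) / Real.sqrt D = e / (r * t) := by
    field_simp
  unfold FF
  have : 2 * Real.arsinh (e * Real.sqrt D / (2 * (r * t))) / Real.sqrt D ≤ e / (r * t) := by
    rw [← h2]
    gcongr
  have hinner : 0 ≤ e / (r * t) - 2 * Real.arsinh (e * Real.sqrt D / (2 * (r * t))) / Real.sqrt D := by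
    linarith
  positivity

lemma FF_le (D r t e : ℝ) (hr : 1 ≤ r) (ht : 1 ≤ t) (he : 0 < e)
    (hD : 0 < D) (h : e ^ 2 - 4 * (r * t) = D) :
    FF D r t e ≤ (D + 4) / (8 * (r * t)) * (e / (r * t)) := by
  have hr0 : (0:ℝ) < r := by linarith
  have ht0 : (0:ℝ) < t := by linarith
  have hdpos : 0 < Real.sqrt D := Real.sqrt_pos.mpr hD
  have hd : Real.sqrt D * Real.sqrt D = D := Real.mul_self_sqrt hD.le
  set σ : ℝ := e * Real.sqrt D / (2 * (r * t)) with hσdef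
  have hσ : (0:ℝ) ≤ σ := by positivity
  have hFF : FF D r t e = (2 / (D * Real.sqrt D)) * (σ - Real.arsinh σ) := by
    unfold FF
    rw [hσdef]
    field_simp
  rw [hFF]
  have hcube := sub_arsinh_le_cube hσ
  have step1 : (2 / (D * Real.sqrt D)) * (σ - Real.arsinh σ) ≤ (2 / (D * Real.sqrt D)) * (σ ^ 3 / 2) := by
    gcongr
  have step2 : (2 / (D * Real.sqrt D)) * (σ ^ 3 / 2) = e ^ 3 / (8 * (r * t) ^ 3) := by
    rw [hσdef]
    field_simp
    linear_combination 8 * hd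
  have step3 : e ^ 3 / (8 * (r * t) ^ 3) ≤ (D + 4) / (8 * (r * t)) * (e / (r * t)) := by
    rw [div_le_iff₀ (by positivity)]
    have he2 : e ^ 2 = D + 4 * (r * t) := by linarith
    have hrt : 1 ≤ r * t := by nlinarith
    have hee : e ^ 2 ≤ (D + 4) * (r * t) := by nlinarith
    have expand : (D + 4) / (8 * (r * t)) * (e / (r * t)) * (8 * (r * t) ^ 3) = (D + 4) * (r * t) * e := by
      field_simp
    rw [expand]
    nlinarith [mul_le_mul_of_nonneg_left hee he.le]
  linarith


section Nodes

variable (A B C : ℤ)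

def qZ (v : ℤ × ℤ) : ℤ := A * v.1 ^ 2 + B * v.1 * v.2 + C * v.2 ^ 2

def bZ (x y : ℤ × ℤ) : ℤ :=
  2 * A * x.1 * y.1 + B * (x.1 * y.2 + x.2 * y.1) + 2 * C * x.2 * y.2

def rv (w : List Bool) : ℤ := qZ A B C (V w).1
def tv (w : List Bool) : ℤ := qZ A B C (V w).2
def ev (w : List Bool) : ℤ := bZ A B C (V w).1 (V w).2

lemma rv_nil : rv A B C [] = A := by simp [rv, qZ, V]
lemma tv_nil : tv A B C [] = C := by simp [tv, qZ, V]
lemma ev_nil : ev A B C [] = B := by simp [ev, bZ, V]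

lemma rv_false (w : List Bool) : rv A B C (false :: w) = rv A B C w := rfl

lemma tv_false (w : List Bool) :
    tv A B C (false :: w) = rv A B C w + tv A B C w + ev A B C w := by
  simp only [tv, rv, ev, V, qZ, bZ, Prod.fst_add, Prod.snd_add]; ring

lemma ev_false (w : List Bool) :
    ev A B C (false :: w) = ev A B C w + 2 * rv A B C w := by
  simp only [ev, rv, V, qZ, bZ, Prod.fst_add, Prod.snd_add]; ring

lemma rv_true (w : List Bool) :
    rv A B C (true :: w) = rv A B C w + tv A B C w + ev A B C w := by
  simp only [tv, rv, ev, V, qZ, bZ, Prod.fst_add, Prod.snd_add]; ring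

lemma tv_true (w : List Bool) : tv A B C (true :: w) = tv A B C w := rfl

lemma ev_true (w : List Bool) :
    ev A B C (true :: w) = ev A B C w + 2 * tv A B C w := by
  simp only [ev, tv, V, qZ, bZ, Prod.fst_add, Prod.snd_add]; ring

lemma invariantZ (w : List Bool) :
    ev A B C w ^ 2 - 4 * (rv A B C w * tv A B C w) = B ^ 2 - 4 * (A * C) := by
  induction w with
  | nil => rw [rv_nil, tv_nil, ev_nil]
  | cons b w ih =>
    cases b
    · rw [rv_false, tv_false, ev_false]; linear_combination ih
    · rw [rv_true, tv_true, ev_true]; linear_combination ih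

lemma node_pos (hA : 0 < A) (hB : 0 < B) (hC : 0 < C) (w : List Bool) :
    1 ≤ rv A B C w ∧ 1 ≤ tv A B C w ∧ 1 ≤ ev A B C w := by
  induction w with
  | nil => rw [rv_nil, tv_nil, ev_nil]; omega
  | cons b w ih =>
    obtain ⟨h1, h2, h3⟩ := ih
    cases b
    · rw [rv_false, tv_false, ev_false]; omega
    · rw [rv_true, tv_true, ev_true]; omega

lemma node_grow (hA : 0 < A) (hB : 0 < B) (hC : 0 < C) (w : List Bool) :
    2 * (w.length : ℤ) + 1 ≤ rv A B C w * tv A B C w := by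
  induction w with
  | nil =>
    rw [rv_nil, tv_nil]; simp only [List.length_nil, Nat.cast_zero]
    nlinarith
  | cons b w ih =>
    obtain ⟨h1, h2, h3⟩ := node_pos A B C hA hB hC w
    simp only [List.length_cons, Nat.cast_add, Nat.cast_one]
    cases b
    · rw [rv_false, tv_false]; nlinarith
    · rw [rv_true, tv_true]; nlinarith

end Nodes

/-! ### levels -/

def L : ℕ → Finset (List Bool)
  | 0 => {[]}
  | n + 1 => (L n).image (List.cons false) ∪ (L n).image (List.cons true)

lemma mem_L {n : ℕ} {w : List Bool} : w ∈ L n ↔ w.length = n := by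
  induction n generalizing w with
  | zero => simp [L, List.length_eq_zero_iff]
  | succ n ih =>
    simp only [L, Finset.mem_union, Finset.mem_image]
    cases w with
    | nil => simp
    | cons b w =>
      cases b <;> simp_all <;> omega

lemma sum_L_succ (f : List Bool → ℝ) (n : ℕ) :
    ∑ w ∈ L (n + 1), f w = ∑ w ∈ L n, (f (false :: w) + f (true :: w)) := by
  have hdisj : Disjoint ((L n).image (List.cons false)) ((L n).image (List.cons true)) := by
    simp only [Finset.disjoint_left, Finset.mem_image]
    rintro x ⟨a, -, rfl⟩ ⟨b, -, hb⟩
    simp at hb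
  have hinjf : Set.InjOn (List.cons false) (L n) := fun a _ b _ h => by simpa using h
  have hinjt : Set.InjOn (List.cons true) (L n) := fun a _ b _ h => by simpa using h
  rw [show L (n+1) = (L n).image (List.cons false) ∪ (L n).image (List.cons true) from rfl,
    Finset.sum_union hdisj, Finset.sum_image hinjf, Finset.sum_image hinjt,
    ← Finset.sum_add_distrib]

section Main

variable (A B C : ℤ)

noncomputable def Fn (w : List Bool) : ℝ :=
  FF ((B:ℝ)^2 - 4*((A:ℝ)*(C:ℝ))) (rv A B C w) (tv A B C w) (ev A B C w)

noncomputable def Gn (w : List Bool) : ℝ :=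
  (ev A B C w : ℝ) / ((rv A B C w : ℝ) * (tv A B C w : ℝ))

noncomputable def termR (w : List Bool) : ℝ :=
  1 / ((rv A B C w : ℝ) * (tv A B C w : ℝ) *
    ((rv A B C w : ℝ) + (tv A B C w : ℝ) + (ev A B C w : ℝ)))

lemma hDR (hD : 0 < B ^ 2 - 4 * A * C) : (0:ℝ) < (B:ℝ)^2 - 4*((A:ℝ)*(C:ℝ)) := by
  have : ((B ^ 2 - 4 * A * C : ℤ) : ℝ) > 0 := by exact_mod_cast hD
  push_cast at this
  linarith

lemma invR (w : List Bool) :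
    (ev A B C w : ℝ) ^ 2 - 4 * ((rv A B C w : ℝ) * (tv A B C w : ℝ))
      = (B:ℝ)^2 - 4*((A:ℝ)*(C:ℝ)) := by
  have := invariantZ A B C w
  exact_mod_cast congrArg (fun z : ℤ => (z : ℝ)) this

lemma Fn_step (hA : 0 < A) (hB : 0 < B) (hC : 0 < C) (hD : 0 < B ^ 2 - 4 * A * C) (w : List Bool) :
    Fn A B C w = termR A B C w + Fn A B C (false :: w) + Fn A B C (true :: w) := by
  obtain ⟨p1, p2, p3⟩ := node_pos A B C hA hB hC w
  have hr : (0:ℝ) < (rv A B C w : ℝ) := by exact_mod_cast lt_of_lt_of_le one_pos p1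
  have ht : (0:ℝ) < (tv A B C w : ℝ) := by exact_mod_cast lt_of_lt_of_le one_pos p2
  have he : (0:ℝ) < (ev A B C w : ℝ) := by exact_mod_cast lt_of_lt_of_le one_pos p3
  have key := FF_step _ _ _ _ hr ht he (hDR A B C hD) (invR A B C w)
  have e1 : Fn A B C (false :: w) = FF ((B:ℝ)^2 - 4*((A:ℝ)*(C:ℝ)))
      (rv A B C w : ℝ) ((rv A B C w : ℝ) + (tv A B C w : ℝ) + (ev A B C w : ℝ))
      ((ev A B C w : ℝ) + 2 * (rv A B C w : ℝ)) := by
    unfold Fn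
    rw [rv_false, tv_false, ev_false]
    norm_cast
  have e2 : Fn A B C (true :: w) = FF ((B:ℝ)^2 - 4*((A:ℝ)*(C:ℝ)))
      ((rv A B C w : ℝ) + (tv A B C w : ℝ) + (ev A B C w : ℝ)) (tv A B C w : ℝ)
      ((ev A B C w : ℝ) + 2 * (tv A B C w : ℝ)) := by
    unfold Fn
    rw [rv_true, tv_true, ev_true]
    norm_cast
  rw [e1, e2]
  unfold Fn termR
  rw [key]

lemma G_alg (Dv r t e : ℝ) (hr : 0 < r) (ht : 0 < t) (he : 0 < e)
    (hDv : 0 < Dv) (h : e ^ 2 - 4 * (r * t) = Dv) :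
    (e + 2*r)/(r*(r+t+e)) + (e + 2*t)/((r+t+e)*t) ≤ e/(r*t) := by
  have hs : (0:ℝ) < r + t + e := by positivity
  have key : e/(r*t) - ((e + 2*r)/(r*(r+t+e)) + (e + 2*t)/((r+t+e)*t))
      = Dv/(r*t*(r+t+e)) := by
    field_simp
    rw [← h]; ring
  have : (0:ℝ) < Dv/(r*t*(r+t+e)) := by positivity
  linarith

lemma Gn_step (hA : 0 < A) (hB : 0 < B) (hC : 0 < C) (hD : 0 < B ^ 2 - 4 * A * C) (w : List Bool) :
    Gn A B C (false :: w) + Gn A B C (true :: w) ≤ Gn A B C w := by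
  obtain ⟨p1, p2, p3⟩ := node_pos A B C hA hB hC w
  have hr : (0:ℝ) < (rv A B C w : ℝ) := by exact_mod_cast lt_of_lt_of_le one_pos p1
  have ht : (0:ℝ) < (tv A B C w : ℝ) := by exact_mod_cast lt_of_lt_of_le one_pos p2
  have he : (0:ℝ) < (ev A B C w : ℝ) := by exact_mod_cast lt_of_lt_of_le one_pos p3
  have key := G_alg _ _ _ _ hr ht he (hDR A B C hD) (invR A B C w)
  have e1 : Gn A B C (false :: w)
      = ((ev A B C w : ℝ) + 2 * (rv A B C w : ℝ)) /
        ((rv A B C w : ℝ) * ((rv A B C w : ℝ) + (tv A B C w : ℝ) + (ev A B C w : ℝ))) := by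
    unfold Gn
    rw [rv_false, tv_false, ev_false]
    norm_cast
  have e2 : Gn A B C (true :: w)
      = ((ev A B C w : ℝ) + 2 * (tv A B C w : ℝ)) /
        (((rv A B C w : ℝ) + (tv A B C w : ℝ) + (ev A B C w : ℝ)) * (tv A B C w : ℝ)) := by
    unfold Gn
    rw [rv_true, tv_true, ev_true]
    norm_cast
  rw [e1, e2]
  exact key

lemma Gn_nonneg (hA : 0 < A) (hB : 0 < B) (hC : 0 < C) (w : List Bool) : 0 ≤ Gn A B C w := by
  obtain ⟨p1, p2, p3⟩ := node_pos A B C hA hB hC w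
  have hr : (0:ℝ) < (rv A B C w : ℝ) := by exact_mod_cast lt_of_lt_of_le one_pos p1
  have ht : (0:ℝ) < (tv A B C w : ℝ) := by exact_mod_cast lt_of_lt_of_le one_pos p2
  have he : (0:ℝ) < (ev A B C w : ℝ) := by exact_mod_cast lt_of_lt_of_le one_pos p3
  unfold Gn
  positivity

lemma termR_pos (hA : 0 < A) (hB : 0 < B) (hC : 0 < C) (w : List Bool) : 0 < termR A B C w := by
  obtain ⟨p1, p2, p3⟩ := node_pos A B C hA hB hC w
  have hr : (0:ℝ) < (rv A B C w : ℝ) := by exact_mod_cast lt_of_lt_of_le one_pos p1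
  have ht : (0:ℝ) < (tv A B C w : ℝ) := by exact_mod_cast lt_of_lt_of_le one_pos p2
  have he : (0:ℝ) < (ev A B C w : ℝ) := by exact_mod_cast lt_of_lt_of_le one_pos p3
  unfold termR
  positivity

lemma Fn_nonneg (hA : 0 < A) (hB : 0 < B) (hC : 0 < C) (hD : 0 < B ^ 2 - 4 * A * C) (w : List Bool) : 0 ≤ Fn A B C w := by
  obtain ⟨p1, p2, p3⟩ := node_pos A B C hA hB hC w
  have hr : (0:ℝ) < (rv A B C w : ℝ) := by exact_mod_cast lt_of_lt_of_le one_pos p1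
  have ht : (0:ℝ) < (tv A B C w : ℝ) := by exact_mod_cast lt_of_lt_of_le one_pos p2
  have he : (0:ℝ) < (ev A B C w : ℝ) := by exact_mod_cast lt_of_lt_of_le one_pos p3
  exact FF_nonneg _ _ _ _ hr ht he (hDR A B C hD)

lemma tele (hA : 0 < A) (hB : 0 < B) (hC : 0 < C) (hD : 0 < B ^ 2 - 4 * A * C) (n : ℕ) :
    Fn A B C [] = (∑ k ∈ Finset.range n, ∑ w ∈ L k, termR A B C w)
      + ∑ w ∈ L n, Fn A B C w := by
  induction n with
  | zero => simp [L]
  | succ n ih =>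
    rw [Finset.sum_range_succ, sum_L_succ (Fn A B C) n]
    have hstep : ∑ w ∈ L n, Fn A B C w
        = ∑ w ∈ L n, termR A B C w + ∑ w ∈ L n, (Fn A B C (false :: w) + Fn A B C (true :: w)) := by
      rw [← Finset.sum_add_distrib]
      refine Finset.sum_congr rfl fun w _ => ?_
      rw [Fn_step A B C hA hB hC hD w]
      ring
    rw [ih, hstep]
    ring

lemma G_level (hA : 0 < A) (hB : 0 < B) (hC : 0 < C) (hD : 0 < B ^ 2 - 4 * A * C) (n : ℕ) : ∑ w ∈ L n, Gn A B C w ≤ Gn A B C [] := by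
  induction n with
  | zero => simp [L]
  | succ n ih =>
    rw [sum_L_succ]
    refine le_trans (Finset.sum_le_sum fun w _ => Gn_step A B C hA hB hC hD w) ih

lemma F_level (hA : 0 < A) (hB : 0 < B) (hC : 0 < C) (hD : 0 < B ^ 2 - 4 * A * C) (n : ℕ) :
    ∑ w ∈ L n, Fn A B C w
      ≤ (((B:ℝ)^2 - 4*((A:ℝ)*(C:ℝ)) + 4) / 8 * Gn A B C []) * (1 / (2 * (n:ℝ) + 1)) := by
  have hn : (0:ℝ) < 2 * (n:ℝ) + 1 := by positivity
  have step1 : ∑ w ∈ L n, Fn A B C w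
      ≤ ∑ w ∈ L n, (((B:ℝ)^2 - 4*((A:ℝ)*(C:ℝ)) + 4) / (8 * (2 * (n:ℝ) + 1)) * Gn A B C w) := by
    refine Finset.sum_le_sum fun w hw => ?_
    obtain ⟨p1, p2, p3⟩ := node_pos A B C hA hB hC w
    have hr : (1:ℝ) ≤ (rv A B C w : ℝ) := by exact_mod_cast p1
    have ht : (1:ℝ) ≤ (tv A B C w : ℝ) := by exact_mod_cast p2
    have he : (0:ℝ) < (ev A B C w : ℝ) := by exact_mod_cast lt_of_lt_of_le one_pos p3
    have hle := FF_le _ _ _ _ hr ht he (hDR A B C hD) (invR A B C w)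
    have hgrow : 2 * (n:ℝ) + 1 ≤ (rv A B C w : ℝ) * (tv A B C w : ℝ) := by
      have := node_grow A B C hA hB hC w
      rw [mem_L.mp hw] at *
      exact_mod_cast this
    refine le_trans hle ?_
    have hGn : Gn A B C w = (ev A B C w : ℝ) / ((rv A B C w : ℝ) * (tv A B C w : ℝ)) := rfl
    rw [← hGn] at hle ⊢
    have hGnn : 0 ≤ Gn A B C w := Gn_nonneg A B C hA hB hC w
    have hDp : (0:ℝ) < (B:ℝ)^2 - 4*((A:ℝ)*(C:ℝ)) := hDR A B C hD
    gcongr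
  refine le_trans step1 ?_
  rw [← Finset.mul_sum]
  have hc : (0:ℝ) ≤ ((B:ℝ)^2 - 4*((A:ℝ)*(C:ℝ)) + 4) / (8 * (2 * (n:ℝ) + 1)) := by
    have := hDR A B C hD
    positivity
  calc ((B:ℝ)^2 - 4*((A:ℝ)*(C:ℝ)) + 4) / (8 * (2 * (n:ℝ) + 1)) * ∑ w ∈ L n, Gn A B C w
      ≤ ((B:ℝ)^2 - 4*((A:ℝ)*(C:ℝ)) + 4) / (8 * (2 * (n:ℝ) + 1)) * Gn A B C [] := by
        exact mul_le_mul_of_nonneg_left (G_level A B C hA hB hC hD n) hc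
    _ = (((B:ℝ)^2 - 4*((A:ℝ)*(C:ℝ)) + 4) / 8 * Gn A B C []) * (1 / (2 * (n:ℝ) + 1)) := by
        field_simp

lemma tendsto_F_level (hA : 0 < A) (hB : 0 < B) (hC : 0 < C) (hD : 0 < B ^ 2 - 4 * A * C) :
    Filter.Tendsto (fun n => ∑ w ∈ L n, Fn A B C w) Filter.atTop (nhds 0) := by
  have h1 : Filter.Tendsto (fun n : ℕ => 2 * (n:ℝ) + 1) Filter.atTop Filter.atTop := by
    apply Filter.tendsto_atTop_add_const_right
    exact (tendsto_natCast_atTop_atTop (R := ℝ)).const_mul_atTop two_pos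
  have h2 : Filter.Tendsto (fun n : ℕ =>
      (((B:ℝ)^2 - 4*((A:ℝ)*(C:ℝ)) + 4) / 8 * Gn A B C []) * (1 / (2 * (n:ℝ) + 1)))
      Filter.atTop (nhds 0) := by
    rw [show (0:ℝ) = (((B:ℝ)^2 - 4*((A:ℝ)*(C:ℝ)) + 4) / 8 * Gn A B C []) * 0 by ring]
    exact (h1.inv_tendsto_atTop.congr (fun n => (one_div _).symm)).const_mul _
  refine squeeze_zero (fun n => Finset.sum_nonneg fun w _ => Fn_nonneg A B C hA hB hC hD w)
    (fun n => F_level A B C hA hB hC hD n) h2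

lemma hasSum_words (hA : 0 < A) (hB : 0 < B) (hC : 0 < C) (hD : 0 < B ^ 2 - 4 * A * C) : HasSum (termR A B C) (Fn A B C []) := by
  apply hasSum_of_isLUB_of_nonneg (Fn A B C []) (fun w => (termR_pos A B C hA hB hC w).le)
  constructor
  · rintro x ⟨s, rfl⟩
    set n := s.sup List.length + 1 with hn
    have hsub : s ⊆ (Finset.range n).biUnion L := by
      intro w hw
      exact Finset.mem_biUnion.mpr ⟨w.length,
        Finset.mem_range.mpr (Nat.lt_succ_of_le (Finset.le_sup hw)), mem_L.mpr rfl⟩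
    have hdisj : Set.PairwiseDisjoint ↑(Finset.range n) L := by
      intro i _ j _ hij
      simp only [Finset.disjoint_left]
      intro w hwi hwj
      exact hij ((mem_L.mp hwi).symm.trans (mem_L.mp hwj))
    calc ∑ w ∈ s, termR A B C w
        ≤ ∑ w ∈ (Finset.range n).biUnion L, termR A B C w :=
          Finset.sum_le_sum_of_subset_of_nonneg hsub
            (fun w _ _ => (termR_pos A B C hA hB hC w).le)
      _ = ∑ k ∈ Finset.range n, ∑ w ∈ L k, termR A B C w := Finset.sum_biUnion hdisj
      _ ≤ Fn A B C [] := by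
          have := tele A B C hA hB hC hD n
          have hnn : 0 ≤ ∑ w ∈ L n, Fn A B C w :=
            Finset.sum_nonneg fun w _ => Fn_nonneg A B C hA hB hC hD w
          linarith
  · intro b hb
    have hmem : ∀ n : ℕ, (∑ k ∈ Finset.range n, ∑ w ∈ L k, termR A B C w) ≤ b := by
      intro n
      have hdisj : Set.PairwiseDisjoint ↑(Finset.range n) L := by
        intro i _ j _ hij
        simp only [Finset.disjoint_left]
        intro w hwi hwj
        exact hij ((mem_L.mp hwi).symm.trans (mem_L.mp hwj))
      have h2 : ∑ w ∈ (Finset.range n).biUnion L, termR A B C w ≤ b :=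
        hb ⟨(Finset.range n).biUnion L, rfl⟩
      rwa [Finset.sum_biUnion hdisj] at h2
    have htend : Filter.Tendsto (fun n => ∑ k ∈ Finset.range n, ∑ w ∈ L k, termR A B C w)
        Filter.atTop (nhds (Fn A B C [])) := by
      have heq : (fun n => ∑ k ∈ Finset.range n, ∑ w ∈ L k, termR A B C w)
          = fun n => Fn A B C [] - ∑ w ∈ L n, Fn A B C w := by
        funext n
        have := tele A B C hA hB hC hD n
        linarith
      rw [heq, show nhds (Fn A B C []) = nhds (Fn A B C [] - 0) by rw [sub_zero]]
      exact Filter.Tendsto.sub tendsto_const_nhds (tendsto_F_level A B C hA hB hC hD)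
    exact le_of_tendsto htend (Filter.Eventually.of_forall hmem)

end Main



end Top3

theorem stmt_2 (A B C : ℤ) (hA : 0 < A) (hB : 0 < B) (hC : 0 < C)
    (hD : 0 < B ^ 2 - 4 * A * C) :
    HasSum
      (fun p : S =>
        1 / (q A B C p.val.1 * q A B C p.val.2 * q A B C (p.val.1 + p.val.2)))
      ((1 / ((B : ℝ) ^ 2 - 4 * A * C)) *
        ((B : ℝ) / ((A : ℝ) * (C : ℝ)) -
          2 * Real.arsinh (((B : ℝ) / ((A : ℝ) * (C : ℝ))) *
              (Real.sqrt ((B : ℝ) ^ 2 - 4 * A * C) / 2)) /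
            Real.sqrt ((B : ℝ) ^ 2 - 4 * A * C))) := by
  classical
  have hbij : Function.Bijective (fun w : List Bool => (⟨Top3.V w, Top3.V_mem_S w⟩ : S)) := by
    constructor
    · intro w1 w2 h
      exact Top3.V_injective (congrArg Subtype.val h)
    · rintro ⟨p, hp⟩
      obtain ⟨w, hw⟩ := Top3.V_surjS p hp
      exact ⟨w, Subtype.ext hw⟩
  rw [← Equiv.hasSum_iff (Equiv.ofBijective _ hbij)]
  have hq : ∀ v : ℤ × ℤ, q A B C v = ((Top3.qZ A B C v : ℤ) : ℝ) := by
    intro v; unfold q Top3.qZ; push_cast; ring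
  have hfun : (fun p : S =>
      1 / (q A B C p.val.1 * q A B C p.val.2 * q A B C (p.val.1 + p.val.2)))
        ∘ (Equiv.ofBijective _ hbij) = Top3.termR A B C := by
    funext w
    have hadd : Top3.qZ A B C ((Top3.V w).1 + (Top3.V w).2)
        = Top3.rv A B C w + Top3.tv A B C w + Top3.ev A B C w := by
      unfold Top3.qZ Top3.rv Top3.tv Top3.ev Top3.bZ
      simp only [Prod.fst_add, Prod.snd_add, Top3.qZ]
      ring
    simp only [Function.comp_apply, Equiv.ofBijective_apply]
    rw [hq, hq, hq, hadd]
    unfold Top3.termR Top3.rv Top3.tv Top3.ev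
    push_cast
    ring
  rw [hfun]
  have hval : Top3.Fn A B C []
      = ((1 / ((B : ℝ) ^ 2 - 4 * A * C)) *
        ((B : ℝ) / ((A : ℝ) * (C : ℝ)) -
          2 * Real.arsinh (((B : ℝ) / ((A : ℝ) * (C : ℝ))) *
              (Real.sqrt ((B : ℝ) ^ 2 - 4 * A * C) / 2)) /
            Real.sqrt ((B : ℝ) ^ 2 - 4 * A * C))) := by
    unfold Top3.Fn Top3.FF
    rw [Top3.rv_nil, Top3.tv_nil, Top3.ev_nil]
    have hDe : (B:ℝ)^2 - 4*((A:ℝ)*(C:ℝ)) = (B:ℝ)^2 - 4*(A:ℝ)*(C:ℝ) := by ring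
    rw [hDe]
    have harg : (B:ℝ) * Real.sqrt ((B:ℝ)^2 - 4*(A:ℝ)*(C:ℝ)) / (2*((A:ℝ)*(C:ℝ)))
        = (B:ℝ)/((A:ℝ)*(C:ℝ)) * (Real.sqrt ((B:ℝ)^2 - 4*(A:ℝ)*(C:ℝ))/2) := by
      ring
    rw [harg]
  rw [← hval]
  exact Top3.hasSum_words A B C hA hB hC hD
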